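/- Let G be the double ray, i.e. the simple graph with vertex set ℤ in which two integers are adjacent if and only if they differ by 1, let r assign positive resistances to its edges with ∑_{n∈ℤ} r({n,n+1}) < ∞, and set p = 0 and q = 1. Then there exist two distinct flows of intensity 1 from p to q in this network, both of finite energy and both satisfying Kirchhoff's cycle law. (Consequently the cut-respecting hypothesis cannot be dropped from the uniqueness theorem for networks of finite total resistance.) -/

import Mathlib

open scoped ENNReal Classical

/-- `f` is a flow of intensity `I` from `p` to `q` in the graph `G`:
it is antisymmetric, vanishes on non-adjacent pairs, and satisfies
Kirchhoff's node law at every vertex (the family of values on edges leaving a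
vertex is summable, with sum `I` at `p`, `-I` at `q` and `0` elsewhere). -/
def IsFlow {V : Type} (G : SimpleGraph V) (p q : V) (I : ℝ) (f : V → V → ℝ) : Prop :=
  (∀ x y, f x y = - f y x) ∧
  (∀ x y, ¬ G.Adj x y → f x y = 0) ∧
  ∀ x : V, HasSum (fun y : G.neighborSet x => f x y)
    (if x = p then I else if x = q then -I else 0)

/-- The energy `W(f) = ∑_{xy ∈ E} f(x,y)² r(xy)`; each edge of `G` corresponds to
exactly two ordered adjacent pairs contributing the same amount, whence the
division by 2. Valued in `ℝ≥0∞`. -/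
noncomputable def energy {V : Type} (G : SimpleGraph V) (r : Sym2 V → ℝ)
    (f : V → V → ℝ) : ℝ≥0∞ :=
  (∑' e : {e : V × V // G.Adj e.1 e.2},
      ENNReal.ofReal (f e.1.1 e.1.2 ^ 2 * r s(e.1.1, e.1.2))) / 2

/-- Kirchhoff's cycle law: around every (finite) cycle the potential
differences `f(x,y) · r(xy)` sum to zero. -/
def CycleLaw {V : Type} (G : SimpleGraph V) (r : Sym2 V → ℝ) (f : V → V → ℝ) : Prop :=
  ∀ (v : V) (c : G.Walk v v), c.IsCycle →
    (c.darts.map (fun d => f d.toProd.1 d.toProd.2 * r d.edge)).sum = 0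

/-- `f` is cut-respecting: for every set `X` of vertices containing both `p` and `q`
such that only finitely many edges join `X` to its complement, the net flow
across the cut is zero. -/
def CutRespecting {V : Type} (G : SimpleGraph V) (p q : V) (f : V → V → ℝ) : Prop :=
  ∀ X : Set V, p ∈ X → q ∈ X →
    ∀ hX : {e : V × V | e.1 ∈ X ∧ e.2 ∉ X ∧ G.Adj e.1 e.2}.Finite,
      ∑ e ∈ hX.toFinset, f e.1 e.2 = 0

/-- The double ray: the simple graph on `ℤ` in which two integers are adjacent
iff they differ by `1`. -/
def doubleRay : SimpleGraph ℤ := SimpleGraph.fromRel (fun x y => y = x + 1)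


lemma doubleRay_adj {x y : ℤ} : doubleRay.Adj x y ↔ y = x + 1 ∨ x = y + 1 := by
  simp only [doubleRay, SimpleGraph.fromRel_adj]
  constructor
  · rintro ⟨-, h⟩; exact h
  · intro h; exact ⟨by omega, h⟩

noncomputable def F (a : ℤ → ℝ) : ℤ → ℤ → ℝ := fun x y =>
  if y = x + 1 then a x else if x = y + 1 then -(a y) else 0

lemma F_antisymm (a : ℤ → ℝ) : ∀ x y, F a x y = - F a y x := by
  intro x y
  unfold F
  split_ifs <;> first | ring1 | (exfalso; omega)

lemma F_nonadj (a : ℤ → ℝ) : ∀ x y, ¬ doubleRay.Adj x y → F a x y = 0 := by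
  intro x y h
  rw [doubleRay_adj] at h
  unfold F
  split_ifs with h1 h2 <;> tauto

lemma F_hasSum (a : ℤ → ℝ) (x : ℤ) :
    HasSum (fun y : doubleRay.neighborSet x => F a x y) (a x - a (x - 1)) := by
  have hsupp : Function.support (F a x) ⊆ doubleRay.neighborSet x := by
    intro y hy
    simp only [Function.mem_support] at hy
    by_contra hadj
    exact hy (F_nonadj a x y hadj)
  rw [show (fun y : doubleRay.neighborSet x => F a x y) = (F a x ∘ (↑)) from rfl,
    hasSum_subtype_iff_of_support_subset hsupp]
  have h0 : ∀ b ∉ ({x - 1, x + 1} : Finset ℤ), F a x b = 0 := by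
    intro b hb
    simp only [Finset.mem_insert, Finset.mem_singleton] at hb
    unfold F
    split_ifs <;> first | rfl | (exfalso; omega)
  have : HasSum (F a x) (∑ b ∈ ({x - 1, x + 1} : Finset ℤ), F a x b) :=
    hasSum_sum_of_ne_finset_zero h0
  rwa [Finset.sum_pair (by omega : x - 1 ≠ x + 1), show F a x (x - 1) = -(a (x - 1)) by
    unfold F; split_ifs <;> first | ring1 | (exfalso; omega),
    show F a x (x + 1) = a x by unfold F; split_ifs <;> first | rfl | (exfalso; omega),
    neg_add_eq_sub] at this

lemma F_flow (a : ℤ → ℝ)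
    (h : ∀ x : ℤ, a x - a (x - 1) = if x = 0 then 1 else if x = 1 then -1 else 0) :
    IsFlow doubleRay 0 1 1 (F a) := by
  refine ⟨F_antisymm a, F_nonadj a, fun x => ?_⟩
  have := F_hasSum a x
  rw [h x] at this
  convert this using 2 <;> rename_i hx <;> simp [hx]

lemma doubleRay_walk_le (n : ℤ) :
    ∀ {x y : ℤ}, (doubleRay \ SimpleGraph.fromEdgeSet {s(n, n + 1)}).Walk x y →
      (x ≤ n ↔ y ≤ n) := by
  intro x y w
  induction w with
  | nil => rfl
  | @cons u v _ huv _ ih =>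
    refine Iff.trans ?_ ih
    rw [SimpleGraph.sdiff_adj, SimpleGraph.fromEdgeSet_adj] at huv
    obtain ⟨hadj, hne⟩ := huv
    have h1 := doubleRay_adj.mp hadj
    have h2 : ¬(s(u, v) = s(n, n + 1)) := by
      intro hs; exact hne ⟨by simp [hs], hadj.ne⟩
    rw [Sym2.eq_iff] at h2
    push_neg at h2
    obtain ⟨h3, h4⟩ := h2
    constructor <;> intro <;> by_contra <;> omega

lemma doubleRay_isAcyclic : doubleRay.IsAcyclic := by
  rw [SimpleGraph.isAcyclic_iff_forall_adj_isBridge]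
  intro v w hvw
  rw [SimpleGraph.isBridge_iff]
  rcases doubleRay_adj.mp hvw with h | h
  · subst h
    rintro ⟨p⟩
    have := doubleRay_walk_le v p
    omega
  · subst h
    rintro hp
    rw [show s(w + 1, w) = s(w, w + 1) from Sym2.eq_swap] at hp
    obtain ⟨p⟩ := hp.symm
    have := doubleRay_walk_le w p
    omega


lemma doubleRay_edge_mem (n : ℤ) : s(n, n + 1) ∈ doubleRay.edgeSet := by
  rw [SimpleGraph.mem_edgeSet, doubleRay_adj]; left; rfl

lemma F_energy (r : Sym2 ℤ → ℝ) (hr : ∀ e ∈ doubleRay.edgeSet, 0 < r e)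
    (hfin : Summable fun n : ℤ => r s(n, n + 1))
    (a : ℤ → ℝ) (hb : ∀ n, |a n| ≤ 1) :
    energy doubleRay r (F a) < ⊤ := by
  set g : ℤ × ℤ → ℝ≥0∞ := fun e => ENNReal.ofReal (r s(e.1, e.2)) with hg
  have habs : ∀ x y, |F a x y| ≤ 1 := by
    intro x y
    unfold F
    split_ifs
    · exact hb x
    · rw [abs_neg]; exact hb y
    · simp
  have hstep1 : (∑' e : {e : ℤ × ℤ // doubleRay.Adj e.1 e.2},
      ENNReal.ofReal (F a e.1.1 e.1.2 ^ 2 * r s(e.1.1, e.1.2))) ≤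
      ∑' e : {e : ℤ × ℤ // doubleRay.Adj e.1 e.2}, g e.1 := by
    apply ENNReal.tsum_le_tsum
    rintro ⟨⟨x, y⟩, hxy⟩
    apply ENNReal.ofReal_le_ofReal
    have hrpos : 0 < r s(x, y) := hr _ ((SimpleGraph.mem_edgeSet doubleRay).mpr hxy)
    have hsq : F a x y ^ 2 ≤ 1 := by
      have := habs x y
      nlinarith [abs_nonneg (F a x y), sq_abs (F a x y)]
    nlinarith
  set A : Set (ℤ × ℤ) := Set.range (fun n : ℤ => (n, n + 1)) with hA
  set B : Set (ℤ × ℤ) := Set.range (fun n : ℤ => (n + 1, n)) with hB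
  have hSeq : ∀ e : ℤ × ℤ, doubleRay.Adj e.1 e.2 ↔ e ∈ A ∪ B := by
    rintro ⟨x, y⟩
    rw [doubleRay_adj]
    constructor
    · rintro (h | h)
      · exact Or.inl ⟨x, by simp; omega⟩
      · exact Or.inr ⟨y, by simp; omega⟩
    · rintro (⟨n, hn⟩ | ⟨n, hn⟩) <;>
        · obtain ⟨h1, h2⟩ := Prod.mk.injEq .. ▸ hn
          omega
  have hdisj : Disjoint A B := by
    rw [Set.disjoint_left]
    rintro e ⟨n, rfl⟩ ⟨m, hm⟩
    obtain ⟨h1, h2⟩ := Prod.mk.injEq .. ▸ hm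
    omega
  have hT : ∑' n : ℤ, ENNReal.ofReal (r s(n, n + 1)) =
      ENNReal.ofReal (∑' n : ℤ, r s(n, n + 1)) :=
    (ENNReal.ofReal_tsum_of_nonneg (fun n => (hr _ (doubleRay_edge_mem n)).le) hfin).symm
  have hstep2 : (∑' e : {e : ℤ × ℤ // doubleRay.Adj e.1 e.2}, g e.1) ≠ ⊤ := by
    rw [tsum_congr_subtype g hSeq,
      ENNReal.summable.tsum_union_disjoint hdisj ENNReal.summable,
      hA, hB, tsum_range (g ·) (fun n m h => by simpa using (Prod.mk.injEq .. ▸ h).1),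
      tsum_range (g ·) (fun n m h => by simpa using (Prod.mk.injEq .. ▸ h).2)]
    simp only [hg]
    have : ∀ n : ℤ, s(n + 1, n) = s(n, n + 1) := fun n => Sym2.eq_swap
    rw [show (∑' n : ℤ, ENNReal.ofReal (r s(n + 1, n))) =
        ∑' n : ℤ, ENNReal.ofReal (r s(n, n + 1)) from tsum_congr (fun n => by rw [this n])]
    rw [hT]
    exact ENNReal.add_ne_top.mpr ⟨ENNReal.ofReal_ne_top, ENNReal.ofReal_ne_top⟩
  unfold energy
  exact ENNReal.div_lt_top (by exact ne_top_of_le_ne_top hstep2 hstep1) (by norm_num)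


noncomputable def aF : ℤ → ℝ := fun n => if n = 0 then 1 else 0

noncomputable def aG : ℤ → ℝ := fun n => if n = 0 then 0 else -1

lemma aF_cond : ∀ x : ℤ, aF x - aF (x - 1) = if x = 0 then 1 else if x = 1 then -1 else 0 := by
  intro x
  by_cases h0 : x = 0
  · subst h0; norm_num [aF]
  · by_cases h1 : x = 1
    · subst h1; norm_num [aF]
    · have hx1 : ¬(x - 1 = 0) := by omega
      simp [aF, h0, h1, hx1]

lemma aG_cond : ∀ x : ℤ, aG x - aG (x - 1) = if x = 0 then 1 else if x = 1 then -1 else 0 := by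
  intro x
  by_cases h0 : x = 0
  · subst h0; norm_num [aG]
  · by_cases h1 : x = 1
    · subst h1; norm_num [aG]
    · have hx1 : ¬(x - 1 = 0) := by omega
      simp [aG, h0, h1, hx1]

lemma aF_bdd : ∀ n : ℤ, |aF n| ≤ 1 := by
  intro n; unfold aF; split_ifs <;> norm_num

lemma aG_bdd : ∀ n : ℤ, |aG n| ≤ 1 := by
  intro n; unfold aG; split_ifs <;> norm_num

lemma doubleRay_cycleLaw (r : Sym2 ℤ → ℝ) (f : ℤ → ℤ → ℝ) : CycleLaw doubleRay r f := by
  intro v c hc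
  exact (doubleRay_isAcyclic c hc).elim


/-- In the double ray with summable resistances there are two distinct flows of
intensity `1` from `0` to `1`, both of finite energy and both satisfying
Kirchhoff's cycle law.  Hence cut-respecting cannot be dropped from the
uniqueness theorem. -/
theorem doubleRay_two_flows (r : Sym2 ℤ → ℝ)
    (hr : ∀ e ∈ doubleRay.edgeSet, 0 < r e)
    (hfin : Summable fun n : ℤ => r s(n, n + 1)) :
    ∃ f g : ℤ → ℤ → ℝ, f ≠ g ∧
      (IsFlow doubleRay 0 1 1 f ∧ energy doubleRay r f < ⊤ ∧
        CycleLaw doubleRay r f) ∧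
      (IsFlow doubleRay 0 1 1 g ∧ energy doubleRay r g < ⊤ ∧
        CycleLaw doubleRay r g) := by
  refine ⟨F aF, F aG, ?_,
    ⟨F_flow aF aF_cond, F_energy r hr hfin aF aF_bdd, doubleRay_cycleLaw r _⟩,
    ⟨F_flow aG aG_cond, F_energy r hr hfin aG aG_bdd, doubleRay_cycleLaw r _⟩⟩
  intro h
  have h2 := congrFun (congrFun h 1) 2
  norm_num [F, aF, aG] at h2
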